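/- Let G be a topological group. If for every neighborhood U of the identity there exists a finite subset F ⊆ G with G = F·U·F, then G is precompact (totally bounded in its two-sided uniformity). -/

import Mathlib

open Filter Topology

/-- Uspenskij–Solecki criterion: if for every identity neighborhood `U` there is a
finite `F` with `G = F·U·F`, then `G` is precompact, i.e. for every identity
neighborhood `U` there is a finite `F` with `G = U·F`. -/
theorem stmt3 {G : Type*} [Group G] [TopologicalSpace G] [IsTopologicalGroup G]
    (h : ∀ U ∈ 𝓝 (1 : G), ∃ F : Finset G, ∀ g : G,
      ∃ f₁ ∈ F, ∃ u ∈ U, ∃ f₂ ∈ F, g = f₁ * u * f₂) :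
    ∀ U ∈ 𝓝 (1 : G), ∃ F : Finset G, ∀ g : G, ∃ u ∈ U, ∃ f ∈ F, g = u * f := by
  classical
  intro U hU
  -- Find `V ∈ 𝓝 1` such that `v⁻¹ * w ∈ U` for all `v, w ∈ V`.
  obtain ⟨W, hW, hWU⟩ := exists_nhds_one_split hU
  set V : Set G := W ∩ W⁻¹ with hVdef
  have hV : V ∈ 𝓝 (1 : G) := Filter.inter_mem hW (inv_mem_nhds_one G hW)
  have hVU : ∀ v ∈ V, ∀ w ∈ V, v⁻¹ * w ∈ U := by
    intro v hv w hw
    exact hWU v⁻¹ (by simpa using hv.2) w hw.1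
  -- The coverings `G = A·V·B` with finite `A, B`.
  set P : ℕ → Prop := fun n => ∃ A B : Finset G, A.card = n ∧
    ∀ g : G, ∃ a ∈ A, ∃ v ∈ V, ∃ b ∈ B, g = a * v * b with hPdef
  have hex : ∃ n, P n := by
    obtain ⟨F, hF⟩ := h V hV
    exact ⟨F.card, F, F, rfl, hF⟩
  -- Choose a covering with `|A|` minimal.
  obtain ⟨A, B, hcard, hAB⟩ := Nat.find_spec hex
  have hmin : ∀ A' H : Finset G, A'.card < Nat.find hex →
      ¬ ∀ g : G, ∃ a ∈ A', ∃ v ∈ V, ∃ b ∈ H, g = a * v * b := by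
    intro A' H hlt hcov
    exact Nat.find_min hex hlt ⟨A', H, rfl, hcov⟩
  -- `A` is nonempty; fix `a ∈ A`.
  obtain ⟨a, ha, -⟩ := hAB 1
  -- Key claim: for every finite `Y` there is a single `f₀ ∈ B` such that every
  -- `y ∈ Y` can be written as `f₀⁻¹ * (u⁻¹ * w) * b` with `u, w ∈ V`, `b ∈ B`.
  have star : ∀ Y : Finset G, ∃ f₀ ∈ B, ∀ y ∈ Y,
      ∃ u ∈ V, ∃ w ∈ V, ∃ b ∈ B, y = f₀⁻¹ * (u⁻¹ * w) * b := by
    intro Y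
    set H : Finset G := B ∪ (B ×ˢ Y).image (fun p => p.1 * p.2⁻¹) with hHdef
    have hlt : (A.erase a).card < Nat.find hex := by
      rw [← hcard]; exact Finset.card_erase_lt_of_mem ha
    have hnc := hmin (A.erase a) H hlt
    push_neg at hnc
    obtain ⟨g, hg⟩ := hnc
    -- `g` itself decomposes with left coordinate `a`.
    obtain ⟨a₁, ha₁, u, hu, f₀, hf₀, hgdec⟩ := hAB g
    have ha₁a : a₁ = a := by
      by_contra hne
      exact hg a₁ (Finset.mem_erase.2 ⟨hne, ha₁⟩) u hu f₀
        (Finset.mem_union_left _ hf₀) hgdec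
    refine ⟨f₀, hf₀, ?_⟩
    intro y hy
    obtain ⟨a₂, ha₂, w, hw, fy, hfy, hdec2⟩ := hAB (g * y)
    have ha₂a : a₂ = a := by
      by_contra hne
      have hmem : fy * y⁻¹ ∈ H := by
        refine Finset.mem_union_right _ ?_
        exact Finset.mem_image.2 ⟨(fy, y), Finset.mem_product.2 ⟨hfy, hy⟩, rfl⟩
      have : g = a₂ * w * (fy * y⁻¹) := by
        have : g * y * y⁻¹ = a₂ * w * fy * y⁻¹ := by rw [hdec2]
        calc g = g * y * y⁻¹ := by group
          _ = a₂ * w * fy * y⁻¹ := this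
          _ = a₂ * w * (fy * y⁻¹) := by group
      exact hg a₂ (Finset.mem_erase.2 ⟨hne, ha₂⟩) w hw (fy * y⁻¹) hmem this
    refine ⟨u, hu, w, hw, fy, hfy, ?_⟩
    have h1 : g = a * u * f₀ := by rw [← ha₁a]; exact hgdec
    have h2 : g * y = a * w * fy := by rw [← ha₂a]; exact hdec2
    calc y = g⁻¹ * (g * y) := by group
      _ = (a * u * f₀)⁻¹ * (a * w * fy) := by rw [← h1, ← h2]
      _ = f₀⁻¹ * (u⁻¹ * w) * fy := by group
  -- Pigeonhole over `B`: a single `f ∈ B` works for all of `G`.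
  have claim : ∃ f ∈ B, ∀ g : G,
      ∃ u ∈ V, ∃ w ∈ V, ∃ b ∈ B, g = f⁻¹ * (u⁻¹ * w) * b := by
    by_contra hc
    push_neg at hc
    choose! gf hgf using hc
    obtain ⟨f₀, hf₀, hstar⟩ := star (B.image gf)
    obtain ⟨u, hu, w, hw, b, hb, hdec⟩ :=
      hstar (gf f₀) (Finset.mem_image_of_mem gf hf₀)
    exact hgf f₀ hf₀ u hu w hw b hb hdec
  obtain ⟨f, hfB, hf⟩ := claim
  refine ⟨B, fun g => ?_⟩
  obtain ⟨u, hu, w, hw, b, hb, hdec⟩ := hf (f⁻¹ * g)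
  refine ⟨u⁻¹ * w, hVU u hu w hw, b, hb, ?_⟩
  calc g = f * (f⁻¹ * g) := by group
    _ = f * (f⁻¹ * (u⁻¹ * w) * b) := by rw [hdec]
    _ = u⁻¹ * w * b := by group
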